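/- Subdivision identity: fix u ∈ (0,1) and let h_j, Q_j be computed by the new algorithm with all weights 1 at parameter u for control points W_0,…,W_n. Then the left-subdivision control points V_k := Σ_{j=0}^k B^k_j(u) W_j satisfy V_k = Σ_{j=0}^k h_j^{-1} ((n−k)/(n−j)) B^k_j(u) Q_j for 0 ≤ k ≤ n−1, and V_n = Q_n. -/

import Mathlib

open Finset

/-- The Bernstein polynomial `B^n_k` evaluated at `t`. -/
def bern (n k : ℕ) (t : ℝ) : ℝ := (n.choose k : ℝ) * t ^ k * (1 - t) ^ (n - k)

lemma bern_pos {n i : ℕ} {u : ℝ} (hu : u ∈ Set.Ioo (0:ℝ) 1) (hi : i ≤ n) :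
    0 < bern n i u := by
  obtain ⟨h0, h1⟩ := hu
  have hc : (0:ℝ) < n.choose i := by exact_mod_cast Nat.choose_pos hi
  have h1' : (0:ℝ) < 1 - u := by linarith
  unfold bern
  positivity

lemma sum_bern_one {n : ℕ} {u : ℝ} : ∑ i ∈ range (n+1), bern n i u = 1 := by
  have h := add_pow u (1-u) n
  have : ∑ i ∈ range (n+1), bern n i u
      = ∑ i ∈ range (n+1), u ^ i * (1-u) ^ (n-i) * (n.choose i : ℝ) := by
    refine Finset.sum_congr rfl fun i _ => ?_
    unfold bern; ring
  rw [this, ← h]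
  simp

lemma sum_triangle (m : ℕ) (f : ℕ → ℕ → ℝ) :
    ∑ j ∈ range m, ∑ i ∈ range (j+1), f j i = ∑ i ∈ range m, ∑ j ∈ Ico i m, f j i := by
  induction m with
  | zero => simp
  | succ m ih =>
    rw [Finset.sum_range_succ, ih, Finset.sum_range_succ]
    have : ∀ i ∈ range (m+1), ∑ j ∈ Ico i (m+1), f j i = (∑ j ∈ Ico i m, f j i) + f m i := by
      intro i hi
      rw [Finset.sum_Ico_succ_top (Nat.lt_succ_iff.mp (mem_range.mp hi))]
    rw [Finset.sum_congr rfl this, Finset.sum_add_distrib,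
      Finset.sum_range_succ (fun i => ∑ j ∈ Ico i m, f j i), Finset.Ico_self,
      Finset.sum_empty, add_zero]
    simp [Finset.sum_range_succ]

lemma step_id {n k j : ℕ} (hjk : j ≤ k) (hkn : k < n) :
    ((k.choose (j+1) : ℝ)) / (n.choose (j+1)) =
      ((k.choose j : ℝ) * ((k:ℝ) - j)) / ((n.choose j : ℝ) * ((n:ℝ) - j)) := by
  have hjn : j < n := lt_of_le_of_lt hjk hkn
  have h1 : ((k.choose (j+1) : ℝ)) * (j+1) = (k.choose j : ℝ) * ((k:ℝ) - j) := by
    have h' := congrArg (Nat.cast (R := ℝ)) (Nat.choose_succ_right_eq k j)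
    push_cast [Nat.cast_sub hjk] at h'
    linarith [h']
  have h2 : ((n.choose (j+1) : ℝ)) * (j+1) = (n.choose j : ℝ) * ((n:ℝ) - j) := by
    have h' := congrArg (Nat.cast (R := ℝ)) (Nat.choose_succ_right_eq n j)
    push_cast [Nat.cast_sub hjn.le] at h'
    linarith [h']
  have hb' : (n.choose (j+1) : ℝ) ≠ 0 := by
    exact_mod_cast (Nat.choose_pos (by omega : j+1 ≤ n)).ne'
  have hb : (n.choose j : ℝ) ≠ 0 := by
    exact_mod_cast (Nat.choose_pos hjn.le).ne'
  have hnj : (n:ℝ) - j ≠ 0 := by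
    have : (j:ℝ) < n := by exact_mod_cast hjn
    linarith
  rw [div_eq_div_iff hb' (mul_ne_zero hb hnj)]
  linear_combination ((n.choose (j+1):ℝ)) * h1 - ((k.choose (j+1) : ℝ)) * h2

lemma key {n k i : ℕ} {u : ℝ} (hu : u ∈ Set.Ioo (0:ℝ) 1) (hik : i ≤ k) (hkn : k < n) :
    (∑ j ∈ Ico i (k+1), ((n-k:ℕ):ℝ)/((n-j:ℕ):ℝ) * bern k j u * (bern n j u)⁻¹) * bern n i u
      = bern k i u := by
  obtain ⟨h0, h1⟩ := hu
  have h1' : (0:ℝ) < 1 - u := by linarith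
  set c : ℝ := (1-u)^(n-k) with hc
  have hc0 : c ≠ 0 := by positivity
  set Φ : ℕ → ℝ := fun j => (k.choose j : ℝ)/(n.choose j) / c with hΦ
  have hstep : ∀ j ∈ Ico i (k+1),
      ((n-k:ℕ):ℝ)/((n-j:ℕ):ℝ) * bern k j u * (bern n j u)⁻¹ = Φ j - Φ (j+1) := by
    intro j hj
    obtain ⟨hij, hjk'⟩ := mem_Ico.mp hj
    have hjk : j ≤ k := by omega
    have hbj : (n.choose j : ℝ) ≠ 0 := by
      exact_mod_cast (Nat.choose_pos (by omega : j ≤ n)).ne'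
    have hnj : ((n-j:ℕ):ℝ) = (n:ℝ) - j := by
      push_cast [Nat.cast_sub (by omega : j ≤ n)]; ring
    have hnk : ((n-k:ℕ):ℝ) = (n:ℝ) - k := by push_cast [Nat.cast_sub hkn.le]; ring
    have hpow : (1-u)^(n-j) = (1-u)^(k-j) * c := by
      rw [hc, ← pow_add]; congr 1; omega
    have hnj0 : (n:ℝ) - j ≠ 0 := by
      have : (j:ℝ) < n := by exact_mod_cast (by omega : j < n)
      linarith
    have hu0 : u ≠ 0 := ne_of_gt h0
    have h1u0 : (1:ℝ) - u ≠ 0 := ne_of_gt h1'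
    simp only [hΦ]
    rw [step_id hjk hkn]
    unfold bern
    rw [hpow, hnj, hnk]
    field_simp
    ring
  rw [Finset.sum_congr rfl hstep, Finset.sum_Ico_eq_sum_range]
  simp only [add_assoc]
  rw [Finset.sum_range_sub' (fun m => Φ (i + m))]
  have he : i + (k + 1 - i) = k + 1 := by omega
  rw [he]
  have hΦk : Φ (k+1) = 0 := by
    simp only [hΦ, Nat.choose_eq_zero_of_lt (Nat.lt_succ_self k)]
    simp
  rw [hΦk, sub_zero]
  have hbi : (n.choose i : ℝ) ≠ 0 := by
    exact_mod_cast (Nat.choose_pos (by omega : i ≤ n)).ne'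
  have hpow : (1-u)^(n-i) = (1-u)^(k-i) * c := by
    rw [hc, ← pow_add]; congr 1; omega
  simp only [hΦ]
  unfold bern
  rw [hpow]
  field_simp
  ring_nf
  rw [mul_inv_cancel_right₀ hbi]

theorem stmt17 (n d : ℕ) (u : ℝ) (hu : u ∈ Set.Ioo (0 : ℝ) 1)
    (W : ℕ → Fin d → ℝ)
    (h : ℕ → ℝ) (Q V : ℕ → Fin d → ℝ)
    (hh : ∀ j ≤ n, h j = bern n j u / ∑ i ∈ range (j + 1), bern n i u)
    (hQ : ∀ j ≤ n, Q j = (∑ i ∈ range (j + 1), bern n i u)⁻¹ •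
        ∑ i ∈ range (j + 1), bern n i u • W i)
    (hV : ∀ k ≤ n, V k = ∑ j ∈ range (k + 1), bern k j u • W j) :
    (∀ k < n, V k = ∑ j ∈ range (k + 1),
        ((h j)⁻¹ * (((n - k : ℕ) : ℝ) / ((n - j : ℕ) : ℝ)) * bern k j u) • Q j) ∧
      V n = Q n := by
  have hS : ∀ j ≤ n, (0:ℝ) < ∑ i ∈ range (j + 1), bern n i u := by
    intro j hj
    apply Finset.sum_pos
    · intro i hi
      have hi' := mem_range.mp hi
      exact bern_pos hu (by omega : i ≤ n)
    · exact ⟨0, mem_range.mpr (Nat.succ_pos _)⟩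
  constructor
  · intro k hk
    funext x
    rw [hV k hk.le]
    simp only [Finset.sum_apply, Pi.smul_apply, smul_eq_mul]
    have hterm : ∀ j ∈ range (k+1),
        (h j)⁻¹ * (((n - k : ℕ) : ℝ) / ((n - j : ℕ) : ℝ)) * bern k j u * Q j x
          = ∑ i ∈ range (j+1),
              (((n-k:ℕ):ℝ)/((n-j:ℕ):ℝ) * bern k j u * (bern n j u)⁻¹) * (bern n i u * W i x) := by
      intro j hj
      have hjn : j ≤ n := by
        have := mem_range.mp hj; omega
      have hSj := hS j hjn
      have hbj := bern_pos hu hjn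
      rw [hh j hjn, hQ j hjn]
      simp only [Pi.smul_apply, Finset.sum_apply, smul_eq_mul, inv_div]
      rw [← Finset.mul_sum]
      have hS0 : (∑ i ∈ range (j+1), bern n i u) ≠ 0 := ne_of_gt hSj
      have hb0 : bern n j u ≠ 0 := ne_of_gt hbj
      have hnj0 : ((n:ℝ) - (j:ℝ)) ≠ 0 := by
        have hjlt : j < n := lt_of_le_of_lt (Nat.lt_succ_iff.mp (mem_range.mp hj)) hk
        have : (j:ℝ) < n := by exact_mod_cast hjlt
        linarith
      field_simp [hnj0]
    rw [Finset.sum_congr rfl hterm, sum_triangle (k+1)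
      (fun j i => (((n-k:ℕ):ℝ)/((n-j:ℕ):ℝ) * bern k j u * (bern n j u)⁻¹) * (bern n i u * W i x))]
    refine Finset.sum_congr rfl fun i hi => ?_
    have hik : i ≤ k := by
      have := mem_range.mp hi; omega
    rw [← Finset.sum_mul, ← mul_assoc, key hu hik hk]
  · rw [hV n le_rfl, hQ n le_rfl, sum_bern_one, inv_one, one_smul]
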